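/- MIOs with asynchronous composition, weak modal refinement, and asynchronous modal compatibility form an interface theory: (1) asynchronously compatible MIOs are composable; (2) if S' ≤_m* S, T' ≤_m* T and S ⊗_as T is defined, then S' ⊗_as T' is defined and S' ⊗_as T' ≤_m* S ⊗_as T; (3) if S ⇄_ac T, S' ≤_m* S and T' ≤_m* T, then S' ⇄_ac T'. -/

import Mathlib

/-- A modal I/O-transition system (MIO): states, an initial state, a signature of
input, output and internal actions (pairwise disjoint subsets of the action
universe `A`), may-transitions and must-transitions with must ⊆ may. -/
structure MIO (A : Type) where
  State : Type
  start : State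
  inp : Set A
  out : Set A
  intl : Set A
  may : State → A → State → Prop
  must : State → A → State → Prop
  inp_out : ∀ a, a ∈ inp → a ∈ out → False
  inp_intl : ∀ a, a ∈ inp → a ∈ intl → False
  out_intl : ∀ a, a ∈ out → a ∈ intl → False
  must_sub : ∀ s a s', must s a s' → may s a s'

namespace MIO

variable {A B : Type}

/-- The set of all actions of a MIO. -/
def act (S : MIO A) : Set A := S.inp ∪ S.out ∪ S.intl

/-- Two MIOs have the same signature. -/
def SigEq (S T : MIO A) : Prop := S.inp = T.inp ∧ S.out = T.out ∧ S.intl = T.intl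

/-- Strong modal refinement `S ≤_m T`. -/
def StrongRefines (S T : MIO A) : Prop :=
  SigEq S T ∧
  ∃ R : S.State → T.State → Prop, R S.start T.start ∧
    ∀ s t, R s t →
      (∀ a t', T.must t a t' → ∃ s', S.must s a s' ∧ R s' t') ∧
      (∀ a s', S.may s a s' → ∃ t', T.may t a t' ∧ R s' t')

/-- One internal must-transition. -/
def tauMust (S : MIO A) (s s' : S.State) : Prop := ∃ a ∈ S.intl, S.must s a s'

/-- Finitely many (possibly zero) internal must-transitions. -/
def tauMustStar (S : MIO A) : S.State → S.State → Prop := Relation.ReflTransGen S.tauMust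

/-- One internal may-transition. -/
def tauMay (S : MIO A) (s s' : S.State) : Prop := ∃ a ∈ S.intl, S.may s a s'

/-- Finitely many (possibly zero) internal may-transitions. -/
def tauMayStar (S : MIO A) : S.State → S.State → Prop := Relation.ReflTransGen S.tauMay

/-- Weak modal refinement `S ≤_m* T`. -/
def WeakRefines (S T : MIO A) : Prop :=
  SigEq S T ∧
  ∃ R : S.State → T.State → Prop, R S.start T.start ∧
    ∀ s t, R s t →
      (∀ a ∈ T.inp ∪ T.out, ∀ t', T.must t a t' →
        ∃ s1 s2 s', S.tauMustStar s s1 ∧ S.must s1 a s2 ∧ S.tauMustStar s2 s' ∧ R s' t') ∧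
      (∀ a ∈ T.intl, ∀ t', T.must t a t' → ∃ s', S.tauMustStar s s' ∧ R s' t') ∧
      (∀ a ∈ S.inp ∪ S.out, ∀ s', S.may s a s' →
        ∃ t1 t2 t', T.tauMayStar t t1 ∧ T.may t1 a t2 ∧ T.tauMayStar t2 t' ∧ R s' t') ∧
      (∀ a ∈ S.intl, ∀ s', S.may s a s' → ∃ t', T.tauMayStar t t' ∧ R s' t')

/-- Shared actions of two MIOs. -/
def shared (S T : MIO A) : Set A := S.act ∩ T.act

/-- Two MIOs are (syntactically) composable if their actions overlap only on
complementary types. -/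
def Composable (S T : MIO A) : Prop :=
  shared S T ⊆ (S.inp ∩ T.out) ∪ (T.inp ∩ S.out)

/-- Synchronous composition `S ⊗_sy T` of composable MIOs. -/
def syncComp (S T : MIO A) (_h : Composable S T) : MIO A where
  State := S.State × T.State
  start := (S.start, T.start)
  inp := (S.inp ∪ T.inp) \ shared S T
  out := (S.out ∪ T.out) \ shared S T
  intl := S.intl ∪ T.intl ∪ shared S T
  may p a p' :=
    (a ∈ shared S T ∧ S.may p.1 a p'.1 ∧ T.may p.2 a p'.2) ∨
    (a ∈ S.act ∧ a ∉ shared S T ∧ S.may p.1 a p'.1 ∧ p'.2 = p.2) ∨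
    (a ∈ T.act ∧ a ∉ shared S T ∧ T.may p.2 a p'.2 ∧ p'.1 = p.1)
  must p a p' :=
    (a ∈ shared S T ∧ S.must p.1 a p'.1 ∧ T.must p.2 a p'.2) ∨
    (a ∈ S.act ∧ a ∉ shared S T ∧ S.must p.1 a p'.1 ∧ p'.2 = p.2) ∨
    (a ∈ T.act ∧ a ∉ shared S T ∧ T.must p.2 a p'.2 ∧ p'.1 = p.1)
  inp_out := by
    intro a ha hb
    have h1 := S.inp_out a; have h2 := T.inp_out a
    simp only [Set.mem_diff, Set.mem_union, shared, act, Set.mem_inter_iff] at ha hb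
    tauto
  inp_intl := by
    intro a ha hb
    have h1 := S.inp_intl a; have h2 := T.inp_intl a
    simp only [Set.mem_diff, Set.mem_union, shared, act, Set.mem_inter_iff] at ha hb
    tauto
  out_intl := by
    intro a ha hb
    have h1 := S.out_intl a; have h2 := T.out_intl a
    simp only [Set.mem_diff, Set.mem_union, shared, act, Set.mem_inter_iff] at ha hb
    tauto
  must_sub := by
    rintro p a p' (⟨h1, h2, h3⟩ | ⟨h1, h2, h3, h4⟩ | ⟨h1, h2, h3, h4⟩)
    · exact Or.inl ⟨h1, S.must_sub _ _ _ h2, T.must_sub _ _ _ h3⟩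
    · exact Or.inr (Or.inl ⟨h1, h2, S.must_sub _ _ _ h3, h4⟩)
    · exact Or.inr (Or.inr ⟨h1, h2, T.must_sub _ _ _ h3, h4⟩)

/-- Reachability (w.r.t. may-transitions) from the initial state. -/
def Reachable (M : MIO A) (s : M.State) : Prop :=
  Relation.ReflTransGen (fun x y => ∃ a, M.may x a y) M.start s

/-- Strong modal compatibility `S ⇄_sc T`. -/
def StrongCompat (S T : MIO A) : Prop :=
  ∃ h : Composable S T,
    ∀ p : S.State × T.State, (syncComp S T h).Reachable p →
      (∀ a ∈ S.out ∩ T.inp, ∀ s', S.may p.1 a s' → ∃ t', T.must p.2 a t') ∧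
      (∀ a ∈ T.out ∩ S.inp, ∀ t', T.may p.2 a t' → ∃ s', S.must p.1 a s')

/-- Weak modal compatibility `S ⇄_wc T`. -/
def WeakCompat (S T : MIO A) : Prop :=
  ∃ h : Composable S T,
    ∀ p : S.State × T.State, (syncComp S T h).Reachable p →
      (∀ a ∈ S.out ∩ T.inp, ∀ s', S.may p.1 a s' →
        ∃ t1 t', T.tauMustStar p.2 t1 ∧ T.must t1 a t') ∧
      (∀ a ∈ T.out ∩ S.inp, ∀ t', T.may p.2 a t' →
        ∃ s1 s', S.tauMustStar p.1 s1 ∧ S.must s1 a s')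

/-- Finite executions: `Trace M s as s'` means `M` can go from `s` to `s'` by
a sequence of may-transitions labelled by the list of actions `as`. -/
inductive Trace (M : MIO A) : M.State → List A → M.State → Prop
  | nil (s : M.State) : Trace M s [] s
  | cons {s s' s'' : M.State} {a : A} {as : List A} :
      M.may s a s' → Trace M s' as s'' → Trace M s (a :: as) s''

/-- Renaming the actions of a MIO along an injective function. -/
def rename (f : A → B) (hf : Function.Injective f) (S : MIO A) : MIO B where
  State := S.State
  start := S.start
  inp := f '' S.inp
  out := f '' S.out
  intl := f '' S.intl
  may s b s' := ∃ a, b = f a ∧ S.may s a s'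
  must s b s' := ∃ a, b = f a ∧ S.must s a s'
  inp_out := by
    rintro b ⟨a1, h1, rfl⟩ ⟨a2, h2, heq⟩
    obtain rfl := hf heq
    exact S.inp_out a2 h1 h2
  inp_intl := by
    rintro b ⟨a1, h1, rfl⟩ ⟨a2, h2, heq⟩
    obtain rfl := hf heq
    exact S.inp_intl a2 h1 h2
  out_intl := by
    rintro b ⟨a1, h1, rfl⟩ ⟨a2, h2, heq⟩
    obtain rfl := hf heq
    exact S.out_intl a2 h1 h2
  must_sub := by
    rintro s b s' ⟨a, rfl, h⟩
    exact ⟨a, rfl, S.must_sub _ _ _ h⟩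

-- Tagging function: actions in `o` become the fresh "queue input" actions `n^▷`
-- (encoded as `Sum.inr n`), all other actions are kept (as `Sum.inl a`).
open Classical in
noncomputable def tagged (o : Set A) : A → A ⊕ A :=
  fun a => if a ∈ o then Sum.inr a else Sum.inl a

theorem tagged_injective (o : Set A) : Function.Injective (tagged o) := by
  classical
  intro a b h
  by_cases ha : a ∈ o <;> by_cases hb : b ∈ o <;>
    simp [tagged, ha, hb] at h <;> tauto

/-- The queue MIO `Q_o`: a FIFO buffer for messages in `o`. States are finite
strings over `A` (with reachable states being strings over `o`), inputs are the
tagged actions `n^▷ = Sum.inr n`, outputs the actions `n = Sum.inl n` for `n ∈ o`.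
Enqueue at the front, dequeue from the back; may- and must-transitions coincide. -/
def queueMIO (o : Set A) : MIO (A ⊕ A) where
  State := List A
  start := []
  inp := Sum.inr '' o
  out := Sum.inl '' o
  intl := ∅
  may s b s' :=
    (∃ n ∈ o, b = Sum.inr n ∧ s' = n :: s) ∨ (∃ n ∈ o, b = Sum.inl n ∧ s = s' ++ [n])
  must s b s' :=
    (∃ n ∈ o, b = Sum.inr n ∧ s' = n :: s) ∨ (∃ n ∈ o, b = Sum.inl n ∧ s = s' ++ [n])
  inp_out := by rintro b ⟨n, hn, rfl⟩ ⟨m, hm, h⟩; simp at h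
  inp_intl := by rintro b _ h; simp at h
  out_intl := by rintro b _ h; simp at h
  must_sub := fun _ _ _ h => h

theorem omega_composable (o : Set A) (S : MIO A) (ho : o ⊆ S.out) :
    Composable (rename (tagged o) (tagged_injective o) S) (queueMIO o) := by
  classical
  rintro b ⟨hb1, hb2⟩
  have hq : (∃ n ∈ o, Sum.inr n = b) ∨ (∃ n ∈ o, Sum.inl n = b) := by
    simpa [queueMIO, act, Set.image, Set.mem_union] using hb2
  have hr : ∃ a, ((a ∈ S.inp ∨ a ∈ S.out) ∨ a ∈ S.intl) ∧ tagged o a = b := by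
    simpa [rename, act, ← Set.image_union] using hb1
  obtain ⟨a, _, ha⟩ := hr
  rcases hq with ⟨n, hn, hb⟩ | ⟨n, hn, hb⟩
  · right
    constructor
    · exact ⟨n, hn, hb⟩
    · refine ⟨n, ho hn, ?_⟩
      rw [← hb]; simp [tagged, hn]
  · exfalso
    rw [← hb] at ha
    by_cases h : a ∈ o
    · simp [tagged, h] at ha
    · simp [tagged, h] at ha
      exact h (ha ▸ hn)

/-- `Ω_o(S)`: the MIO `S` with an output queue for `o ⊆ out_S`, i.e. the
synchronous product of the renamed MIO `S_o^▷` with the queue MIO `Q_o`. -/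
noncomputable def Omega (o : Set A) (S : MIO A) (ho : o ⊆ S.out) : MIO (A ⊕ A) :=
  syncComp (rename (tagged o) (tagged_injective o) S) (queueMIO o) (omega_composable o S ho)

/-- The outputs of `S` that are inputs of `T`. -/
def oOf (S T : MIO A) : Set A := S.out ∩ T.inp

/-- `Ω_{o_S}(S)` where `o_S = out_S ∩ in_T`. -/
noncomputable def OmegaC (S T : MIO A) : MIO (A ⊕ A) :=
  Omega (oOf S T) S Set.inter_subset_left

/-- Composability of the queue-extended MIOs, i.e. definedness of `S ⊗_as T`. -/
def AsyncComposable (S T : MIO A) : Prop := Composable (OmegaC S T) (OmegaC T S)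

/-- Asynchronous composition `S ⊗_as T = Ω_{o_S}(S) ⊗_sy Ω_{o_T}(T)`. -/
noncomputable def asyncComp (S T : MIO A) (h : AsyncComposable S T) : MIO (A ⊕ A) :=
  syncComp (OmegaC S T) (OmegaC T S) h

/-- Asynchronous modal compatibility `S ⇄_ac T`. -/
def AsyncCompat (S T : MIO A) : Prop :=
  Composable S T ∧ WeakCompat (OmegaC S T) (OmegaC T S)

end MIO

open MIO

namespace MIO

variable {A B : Type}

lemma act_eq {S' S : MIO A} (h : SigEq S' S) : S'.act = S.act := by
  obtain ⟨h1, h2, h3⟩ := h; simp [act, h1, h2, h3]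

lemma shared_eq' {S' S T' T : MIO A} (hS : SigEq S' S) (hT : SigEq T' T) :
    shared S' T' = shared S T := by
  simp [shared, act_eq hS, act_eq hT]

lemma composable_of_sig {S' S T' T : MIO A} (hS : SigEq S' S) (hT : SigEq T' T)
    (h : Composable S T) : Composable S' T' := by
  intro a ha
  rw [shared_eq' hS hT] at ha
  rw [hS.1, hS.2.1, hT.1, hT.2.1]
  exact h ha

lemma visible_not_intl (M : MIO A) {a : A} (h : a ∈ M.inp ∪ M.out) (h2 : a ∈ M.intl) : False := by
  rcases h with h | h
  exacts [M.inp_intl a h h2, M.out_intl a h h2]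

lemma intl_not_shared_left {S T : MIO A} (hc : Composable S T) {a : A}
    (ha : a ∈ S.intl) : a ∉ shared S T := fun h => by
  rcases hc h with ⟨h1, _⟩ | ⟨_, h2⟩
  · exact S.inp_intl a h1 ha
  · exact S.out_intl a h2 ha

lemma intl_not_shared_right {S T : MIO A} (hc : Composable S T) {a : A}
    (ha : a ∈ T.intl) : a ∉ shared S T := fun h => by
  rcases hc h with ⟨_, h2⟩ | ⟨h1, _⟩
  · exact T.out_intl a h2 ha
  · exact T.inp_intl a h1 ha

lemma liftL_mustStar {S T : MIO A} (hc : Composable S T) {s s₁ : S.State} {t : T.State}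
    (h : S.tauMustStar s s₁) : (syncComp S T hc).tauMustStar (s, t) (s₁, t) := by
  induction h with
  | refl => exact .refl
  | tail _ step ih =>
    obtain ⟨a, ha, hm⟩ := step
    exact ih.tail ⟨a, Or.inl (Or.inl ha),
      Or.inr (Or.inl ⟨Or.inr ha, intl_not_shared_left hc ha, hm, rfl⟩)⟩

lemma liftR_mustStar {S T : MIO A} (hc : Composable S T) {t t₁ : T.State} {s : S.State}
    (h : T.tauMustStar t t₁) : (syncComp S T hc).tauMustStar (s, t) (s, t₁) := by
  induction h with
  | refl => exact .refl
  | tail _ step ih =>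
    obtain ⟨a, ha, hm⟩ := step
    exact ih.tail ⟨a, Or.inl (Or.inr ha),
      Or.inr (Or.inr ⟨Or.inr ha, intl_not_shared_right hc ha, hm, rfl⟩)⟩

lemma liftL_mayStar {S T : MIO A} (hc : Composable S T) {s s₁ : S.State} {t : T.State}
    (h : S.tauMayStar s s₁) : (syncComp S T hc).tauMayStar (s, t) (s₁, t) := by
  induction h with
  | refl => exact .refl
  | tail _ step ih =>
    obtain ⟨a, ha, hm⟩ := step
    exact ih.tail ⟨a, Or.inl (Or.inl ha),
      Or.inr (Or.inl ⟨Or.inr ha, intl_not_shared_left hc ha, hm, rfl⟩)⟩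

lemma liftR_mayStar {S T : MIO A} (hc : Composable S T) {t t₁ : T.State} {s : S.State}
    (h : T.tauMayStar t t₁) : (syncComp S T hc).tauMayStar (s, t) (s, t₁) := by
  induction h with
  | refl => exact .refl
  | tail _ step ih =>
    obtain ⟨a, ha, hm⟩ := step
    exact ih.tail ⟨a, Or.inl (Or.inr ha),
      Or.inr (Or.inr ⟨Or.inr ha, intl_not_shared_right hc ha, hm, rfl⟩)⟩

/-- The simulation conditions of weak modal refinement, abstracted over the relation. -/
def IsWeakSim (S T : MIO A) (R : S.State → T.State → Prop) : Prop :=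
  ∀ s t, R s t →
    (∀ a ∈ T.inp ∪ T.out, ∀ t', T.must t a t' →
      ∃ s1 s2 s', S.tauMustStar s s1 ∧ S.must s1 a s2 ∧ S.tauMustStar s2 s' ∧ R s' t') ∧
    (∀ a ∈ T.intl, ∀ t', T.must t a t' → ∃ s', S.tauMustStar s s' ∧ R s' t') ∧
    (∀ a ∈ S.inp ∪ S.out, ∀ s', S.may s a s' →
      ∃ t1 t2 t', T.tauMayStar t t1 ∧ T.may t1 a t2 ∧ T.tauMayStar t2 t' ∧ R s' t') ∧
    (∀ a ∈ S.intl, ∀ s', S.may s a s' → ∃ t', T.tauMayStar t t' ∧ R s' t')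

lemma sim_mustStar {S T : MIO A} {R : S.State → T.State → Prop} (hR : IsWeakSim S T R)
    {s : S.State} {t u : T.State} (hst : R s t) (h : T.tauMustStar t u) :
    ∃ u', S.tauMustStar s u' ∧ R u' u := by
  induction h with
  | refl => exact ⟨s, .refl, hst⟩
  | tail _ step ih =>
    obtain ⟨w, hw, hRw⟩ := ih
    obtain ⟨a, ha, hm⟩ := step
    obtain ⟨u', h1, h2⟩ := (hR _ _ hRw).2.1 a ha _ hm
    exact ⟨u', hw.trans h1, h2⟩

lemma sim_weak_must {S T : MIO A} {R : S.State → T.State → Prop} (hR : IsWeakSim S T R)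
    {s : S.State} {t u1 u2 : T.State} {a : A} (hst : R s t) (ha : a ∈ T.inp ∪ T.out)
    (hstar : T.tauMustStar t u1) (hm : T.must u1 a u2) :
    ∃ v1 v2, S.tauMustStar s v1 ∧ S.must v1 a v2 := by
  obtain ⟨w, hw, hRw⟩ := sim_mustStar hR hst hstar
  obtain ⟨v1, v2, _, h1, h2, _⟩ := (hR _ _ hRw).1 a ha _ hm
  exact ⟨v1, v2, hw.trans h1, h2⟩

lemma syncComp_weakRefines {S' S T' T : MIO A} (hS : WeakRefines S' S) (hT : WeakRefines T' T)
    (hc : Composable S T) (hc' : Composable S' T') :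
    WeakRefines (syncComp S' T' hc') (syncComp S T hc) := by
  obtain ⟨sigS, RS, RS0, hRS⟩ := hS
  obtain ⟨sigT, RT, RT0, hRT⟩ := hT
  have esh : shared S' T' = shared S T := shared_eq' sigS sigT
  have eactS : S'.act = S.act := act_eq sigS
  have eactT : T'.act = T.act := act_eq sigT
  obtain ⟨eSi, eSo, eSn⟩ := sigS
  obtain ⟨eTi, eTo, eTn⟩ := sigT
  refine ⟨⟨?_, ?_, ?_⟩, fun p q => RS p.1 q.1 ∧ RT p.2 q.2, ⟨RS0, RT0⟩, ?_⟩
  · show (S'.inp ∪ T'.inp) \ shared S' T' = (S.inp ∪ T.inp) \ shared S T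
    rw [eSi, eTi, esh]
  · show (S'.out ∪ T'.out) \ shared S' T' = (S.out ∪ T.out) \ shared S T
    rw [eSo, eTo, esh]
  · show S'.intl ∪ T'.intl ∪ shared S' T' = S.intl ∪ T.intl ∪ shared S T
    rw [eSn, eTn, esh]
  rintro ⟨s', t'⟩ ⟨s, t⟩ ⟨hs, ht⟩
  refine ⟨?_, ?_, ?_, ?_⟩
  · -- must, visible
    rintro a ha ⟨s₂, t₂⟩ hmust
    have hni : a ∈ (syncComp S T hc).intl → False := visible_not_intl _ ha
    have hnsh : a ∉ shared S T := fun h => hni (Or.inr h)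
    rcases hmust with ⟨h1, _, _⟩ | ⟨haS, _, hm, heq⟩ | ⟨haT, _, hm, heq⟩
    · exact absurd h1 hnsh
    · have hav : a ∈ S.inp ∪ S.out := by
        rcases haS with h | h
        · exact h
        · exact absurd (show a ∈ (syncComp S T hc).intl from Or.inl (Or.inl h)) hni
      obtain ⟨u1, u2, u3, h1, h2, h3, h4⟩ := (hRS _ _ hs).1 a hav _ hm
      refine ⟨(u1, t'), (u2, t'), (u3, t'), liftL_mustStar hc' h1,
        Or.inr (Or.inl ⟨by rw [eactS]; exact Or.inl hav, by rw [esh]; exact hnsh, h2, rfl⟩),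
        liftL_mustStar hc' h3, h4, by rw [heq]; exact ht⟩
    · have hav : a ∈ T.inp ∪ T.out := by
        rcases haT with h | h
        · exact h
        · exact absurd (show a ∈ (syncComp S T hc).intl from Or.inl (Or.inr h)) hni
      obtain ⟨u1, u2, u3, h1, h2, h3, h4⟩ := (hRT _ _ ht).1 a hav _ hm
      refine ⟨(s', u1), (s', u2), (s', u3), liftR_mustStar hc' h1,
        Or.inr (Or.inr ⟨by rw [eactT]; exact Or.inl hav, by rw [esh]; exact hnsh, h2, rfl⟩),
        liftR_mustStar hc' h3, by rw [heq]; exact hs, h4⟩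
  · -- must, internal
    rintro a ha ⟨s₂, t₂⟩ hmust
    rcases hmust with ⟨hsh, hmS, hmT⟩ | ⟨haS, hnsh, hm, heq⟩ | ⟨haT, hnsh, hm, heq⟩
    · have haS : a ∈ S.inp ∪ S.out := by
        rcases hc hsh with ⟨h1, _⟩ | ⟨_, h2⟩
        exacts [Or.inl h1, Or.inr h2]
      have haT : a ∈ T.inp ∪ T.out := by
        rcases hc hsh with ⟨_, h2⟩ | ⟨h1, _⟩
        exacts [Or.inr h2, Or.inl h1]
      obtain ⟨u1, u2, u3, hu1, hu2, hu3, hru⟩ := (hRS _ _ hs).1 a haS _ hmS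
      obtain ⟨v1, v2, v3, hv1, hv2, hv3, hrv⟩ := (hRT _ _ ht).1 a haT _ hmT
      have hsh' : a ∈ shared S' T' := by rw [esh]; exact hsh
      have step : (syncComp S' T' hc').tauMust (u1, v1) (u2, v2) :=
        ⟨a, Or.inr hsh', Or.inl ⟨hsh', hu2, hv2⟩⟩
      exact ⟨(u3, v3),
        ((((liftL_mustStar hc' hu1).trans (liftR_mustStar hc' hv1)).trans
          (.single step)).trans ((liftL_mustStar hc' hu3).trans (liftR_mustStar hc' hv3))),
        hru, hrv⟩
    · have haIn : a ∈ S.intl := by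
        rcases ha with (h | h) | h
        · exact h
        · exact absurd ⟨haS, Or.inr h⟩ hnsh
        · exact absurd h hnsh
      obtain ⟨u', h1, h2⟩ := (hRS _ _ hs).2.1 a haIn _ hm
      exact ⟨(u', t'), liftL_mustStar hc' h1, h2, by rw [heq]; exact ht⟩
    · have haIn : a ∈ T.intl := by
        rcases ha with (h | h) | h
        · exact absurd ⟨Or.inr h, haT⟩ hnsh
        · exact h
        · exact absurd h hnsh
      obtain ⟨u', h1, h2⟩ := (hRT _ _ ht).2.1 a haIn _ hm
      exact ⟨(s', u'), liftR_mustStar hc' h1, by rw [heq]; exact hs, h2⟩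
  · -- may, visible
    rintro a ha ⟨s₂, t₂⟩ hmay
    have hni : a ∈ (syncComp S' T' hc').intl → False := visible_not_intl _ ha
    have hnsh' : a ∉ shared S' T' := fun h => hni (Or.inr h)
    rcases hmay with ⟨h1, _, _⟩ | ⟨haS, _, hm, heq⟩ | ⟨haT, _, hm, heq⟩
    · exact absurd h1 hnsh'
    · have hav : a ∈ S'.inp ∪ S'.out := by
        rcases haS with h | h
        · exact h
        · exact absurd (show a ∈ (syncComp S' T' hc').intl from Or.inl (Or.inl h)) hni
      obtain ⟨u1, u2, u3, h1, h2, h3, h4⟩ := (hRS _ _ hs).2.2.1 a hav _ hm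
      refine ⟨(u1, t), (u2, t), (u3, t), liftL_mayStar hc h1,
        Or.inr (Or.inl ⟨by rw [← eactS]; exact Or.inl hav, by rw [← esh]; exact hnsh', h2, rfl⟩),
        liftL_mayStar hc h3, h4, by rw [heq]; exact ht⟩
    · have hav : a ∈ T'.inp ∪ T'.out := by
        rcases haT with h | h
        · exact h
        · exact absurd (show a ∈ (syncComp S' T' hc').intl from Or.inl (Or.inr h)) hni
      obtain ⟨u1, u2, u3, h1, h2, h3, h4⟩ := (hRT _ _ ht).2.2.1 a hav _ hm
      refine ⟨(s, u1), (s, u2), (s, u3), liftR_mayStar hc h1,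
        Or.inr (Or.inr ⟨by rw [← eactT]; exact Or.inl hav, by rw [← esh]; exact hnsh', h2, rfl⟩),
        liftR_mayStar hc h3, by rw [heq]; exact hs, h4⟩
  · -- may, internal
    rintro a ha ⟨s₂, t₂⟩ hmay
    rcases hmay with ⟨hsh', hmS, hmT⟩ | ⟨haS, hnsh', hm, heq⟩ | ⟨haT, hnsh', hm, heq⟩
    · have haS : a ∈ S'.inp ∪ S'.out := by
        rcases hc' hsh' with ⟨h1, _⟩ | ⟨_, h2⟩
        exacts [Or.inl h1, Or.inr h2]
      have haT : a ∈ T'.inp ∪ T'.out := by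
        rcases hc' hsh' with ⟨_, h2⟩ | ⟨h1, _⟩
        exacts [Or.inr h2, Or.inl h1]
      obtain ⟨u1, u2, u3, hu1, hu2, hu3, hru⟩ := (hRS _ _ hs).2.2.1 a haS _ hmS
      obtain ⟨v1, v2, v3, hv1, hv2, hv3, hrv⟩ := (hRT _ _ ht).2.2.1 a haT _ hmT
      have hsh : a ∈ shared S T := by rw [← esh]; exact hsh'
      have step : (syncComp S T hc).tauMay (u1, v1) (u2, v2) :=
        ⟨a, Or.inr hsh, Or.inl ⟨hsh, hu2, hv2⟩⟩
      exact ⟨(u3, v3),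
        ((((liftL_mayStar hc hu1).trans (liftR_mayStar hc hv1)).trans
          (.single step)).trans ((liftL_mayStar hc hu3).trans (liftR_mayStar hc hv3))),
        hru, hrv⟩
    · have haIn : a ∈ S'.intl := by
        rcases ha with (h | h) | h
        · exact h
        · exact absurd ⟨haS, Or.inr h⟩ hnsh'
        · exact absurd h hnsh'
      obtain ⟨u', h1, h2⟩ := (hRS _ _ hs).2.2.2 a haIn _ hm
      exact ⟨(u', t), liftL_mayStar hc h1, h2, by rw [heq]; exact ht⟩
    · have haIn : a ∈ T'.intl := by
        rcases ha with (h | h) | h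
        · exact absurd ⟨Or.inr h, haT⟩ hnsh'
        · exact h
        · exact absurd h hnsh'
      obtain ⟨u', h1, h2⟩ := (hRT _ _ ht).2.2.2 a haIn _ hm
      exact ⟨(s, u'), liftR_mayStar hc h1, by rw [heq]; exact hs, h2⟩

lemma rename_mustStar {S : MIO A} (f : A → B) (hf : Function.Injective f)
    {s u : S.State} (h : S.tauMustStar s u) : (rename f hf S).tauMustStar s u := by
  induction h with
  | refl => exact .refl
  | tail _ step ih =>
    obtain ⟨a, ha, hm⟩ := step
    exact ih.tail ⟨f a, ⟨a, ha, rfl⟩, a, rfl, hm⟩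

lemma rename_mayStar {S : MIO A} (f : A → B) (hf : Function.Injective f)
    {s u : S.State} (h : S.tauMayStar s u) : (rename f hf S).tauMayStar s u := by
  induction h with
  | refl => exact .refl
  | tail _ step ih =>
    obtain ⟨a, ha, hm⟩ := step
    exact ih.tail ⟨f a, ⟨a, ha, rfl⟩, a, rfl, hm⟩

lemma rename_weakRefines {S' S : MIO A} (f : A → B) (hf : Function.Injective f)
    (h : WeakRefines S' S) : WeakRefines (rename f hf S') (rename f hf S) := by
  obtain ⟨⟨e1, e2, e3⟩, R, R0, hR⟩ := h
  refine ⟨⟨?_, ?_, ?_⟩, R, R0, ?_⟩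
  · show f '' S'.inp = f '' S.inp; rw [e1]
  · show f '' S'.out = f '' S.out; rw [e2]
  · show f '' S'.intl = f '' S.intl; rw [e3]
  intro s t hst
  refine ⟨?_, ?_, ?_, ?_⟩
  · rintro b hb t' ⟨a, rfl, hm⟩
    have ha : a ∈ S.inp ∪ S.out := by
      rcases hb with ⟨c, hc, hfc⟩ | ⟨c, hc, hfc⟩
      · exact Or.inl (by rw [← hf hfc]; exact hc)
      · exact Or.inr (by rw [← hf hfc]; exact hc)
    obtain ⟨u1, u2, u3, h1, h2, h3, h4⟩ := (hR _ _ hst).1 a ha _ hm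
    exact ⟨u1, u2, u3, rename_mustStar f hf h1, ⟨a, rfl, h2⟩, rename_mustStar f hf h3, h4⟩
  · rintro b hb t' ⟨a, rfl, hm⟩
    obtain ⟨c, hc, hfc⟩ := hb
    obtain rfl := hf hfc
    obtain ⟨u', h1, h2⟩ := (hR _ _ hst).2.1 c hc _ hm
    exact ⟨u', rename_mustStar f hf h1, h2⟩
  · rintro b hb s₂ ⟨a, rfl, hm⟩
    have ha : a ∈ S'.inp ∪ S'.out := by
      rcases hb with ⟨c, hc, hfc⟩ | ⟨c, hc, hfc⟩
      · exact Or.inl (by rw [← hf hfc]; exact hc)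
      · exact Or.inr (by rw [← hf hfc]; exact hc)
    obtain ⟨u1, u2, u3, h1, h2, h3, h4⟩ := (hR _ _ hst).2.2.1 a ha _ hm
    exact ⟨u1, u2, u3, rename_mayStar f hf h1, ⟨a, rfl, h2⟩, rename_mayStar f hf h3, h4⟩
  · rintro b hb s₂ ⟨a, rfl, hm⟩
    obtain ⟨c, hc, hfc⟩ := hb
    obtain rfl := hf hfc
    obtain ⟨u', h1, h2⟩ := (hR _ _ hst).2.2.2 c hc _ hm
    exact ⟨u', rename_mayStar f hf h1, h2⟩

lemma weakRefines_refl (S : MIO A) : WeakRefines S S := by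
  refine ⟨⟨rfl, rfl, rfl⟩, Eq, rfl, ?_⟩
  rintro s _ rfl
  exact ⟨fun a _ t' h => ⟨s, t', t', .refl, h, .refl, rfl⟩,
         fun a ha t' h => ⟨t', .single ⟨a, ha, h⟩, rfl⟩,
         fun a _ s' h => ⟨s, s', s', .refl, h, .refl, rfl⟩,
         fun a ha s' h => ⟨s', .single ⟨a, ha, h⟩, rfl⟩⟩

lemma Omega_weakRefines {S' S : MIO A} {o' o : Set A} (e : o' = o) (h : WeakRefines S' S)
    (ho' : o' ⊆ S'.out) (ho : o ⊆ S.out) :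
    WeakRefines (Omega o' S' ho') (Omega o S ho) := by
  subst e
  exact syncComp_weakRefines (rename_weakRefines _ _ h) (weakRefines_refl _) _ _

lemma OmegaC_weakRefines {S' S T' T : MIO A} (hS : WeakRefines S' S) (hT : WeakRefines T' T) :
    WeakRefines (OmegaC S' T') (OmegaC S T) := by
  have e : oOf S' T' = oOf S T := by rw [oOf, oOf, hS.1.2.1, hT.1.1]
  exact Omega_weakRefines e hS _ _

lemma tagged_eq_inl {o : Set A} {a : A} (h : a ∉ o) : tagged o a = Sum.inl a := by
  simp [tagged, h]

lemma tagged_eq_inr {o : Set A} {a : A} (h : a ∈ o) : tagged o a = Sum.inr a := by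
  simp [tagged, h]

lemma shared_rename_queue {o : Set A} {S : MIO A} (ho : o ⊆ S.out) :
    shared (rename (tagged o) (tagged_injective o) S) (queueMIO o) = Sum.inr '' o := by
  apply Set.Subset.antisymm
  · rintro b ⟨hr, hq⟩
    have hq' : (∃ n ∈ o, Sum.inr n = b) ∨ ∃ n ∈ o, Sum.inl n = b := by
      rcases hq with (⟨n, hn, he⟩ | ⟨n, hn, he⟩) | h
      · exact Or.inl ⟨n, hn, he⟩
      · exact Or.inr ⟨n, hn, he⟩
      · exact h.elim
    rcases hq' with ⟨n, hn, rfl⟩ | ⟨n, hn, rfl⟩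
    · exact ⟨n, hn, rfl⟩
    · exfalso
      have hr' : ∃ a, tagged o a = Sum.inl n := by
        rcases hr with (⟨a, _, he⟩ | ⟨a, _, he⟩) | ⟨a, _, he⟩
        exacts [⟨a, he⟩, ⟨a, he⟩, ⟨a, he⟩]
      obtain ⟨a, he⟩ := hr'
      by_cases hao : a ∈ o
      · rw [tagged_eq_inr hao] at he; exact nomatch he
      · rw [tagged_eq_inl hao] at he
        exact hao (by rw [Sum.inl.inj he]; exact hn)
  · rintro b ⟨n, hn, rfl⟩
    exact ⟨Or.inl (Or.inr ⟨n, ho hn, tagged_eq_inr hn⟩), Or.inl (Or.inl ⟨n, hn, rfl⟩)⟩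

lemma Omega_inp {o : Set A} {S : MIO A} (ho : o ⊆ S.out) :
    (Omega o S ho).inp = Sum.inl '' S.inp := by
  have hni : ∀ a ∈ S.inp, a ∉ o := fun a ha h => S.inp_out a ha (ho h)
  show (tagged o '' S.inp ∪ Sum.inr '' o) \
      shared (rename (tagged o) (tagged_injective o) S) (queueMIO o) = _
  rw [shared_rename_queue ho]
  ext b
  constructor
  · rintro ⟨⟨a, ha, rfl⟩ | h2, hnr⟩
    · rw [tagged_eq_inl (hni a ha)]; exact ⟨a, ha, rfl⟩
    · exact absurd h2 hnr
  · rintro ⟨a, ha, rfl⟩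
    refine ⟨Or.inl ⟨a, ha, tagged_eq_inl (hni a ha)⟩, ?_⟩
    rintro ⟨n, _, he⟩
    exact nomatch he

lemma Omega_out {o : Set A} {S : MIO A} (ho : o ⊆ S.out) :
    (Omega o S ho).out = Sum.inl '' S.out := by
  show (tagged o '' S.out ∪ Sum.inl '' o) \
      shared (rename (tagged o) (tagged_injective o) S) (queueMIO o) = _
  rw [shared_rename_queue ho]
  ext b
  constructor
  · rintro ⟨⟨a, ha, rfl⟩ | ⟨n, hn, rfl⟩, hnr⟩
    · by_cases hao : a ∈ o
      · exact absurd (by rw [tagged_eq_inr hao]; exact ⟨a, hao, rfl⟩) hnr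
      · rw [tagged_eq_inl hao]; exact ⟨a, ha, rfl⟩
    · exact ⟨n, ho hn, rfl⟩
  · rintro ⟨a, ha, rfl⟩
    refine ⟨?_, ?_⟩
    · by_cases hao : a ∈ o
      · exact Or.inr ⟨a, hao, rfl⟩
      · exact Or.inl ⟨a, ha, tagged_eq_inl hao⟩
    · rintro ⟨n, _, he⟩
      exact nomatch he

lemma Omega_intl {o : Set A} {S : MIO A} (ho : o ⊆ S.out) :
    (Omega o S ho).intl = Sum.inl '' S.intl ∪ Sum.inr '' o := by
  have hni : ∀ a ∈ S.intl, a ∉ o := fun a ha h => S.out_intl a (ho h) ha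
  show tagged o '' S.intl ∪ (∅ : Set (A ⊕ A)) ∪
      shared (rename (tagged o) (tagged_injective o) S) (queueMIO o) = _
  rw [shared_rename_queue ho, Set.union_empty]
  congr 1
  exact Set.image_congr fun a ha => tagged_eq_inl (hni a ha)

lemma Omega_act {o : Set A} {S : MIO A} (ho : o ⊆ S.out) :
    (Omega o S ho).act = Sum.inl '' S.act ∪ Sum.inr '' o := by
  rw [act, Omega_inp ho, Omega_out ho, Omega_intl ho, act,
    Set.image_union, Set.image_union]
  ext b; simp only [Set.mem_union]; tauto

lemma asyncComposable_of_composable {S T : MIO A} (h : Composable S T) :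
    AsyncComposable S T := by
  intro b hb
  obtain ⟨h1, h2⟩ := hb
  rw [show (OmegaC S T).act = _ from Omega_act _] at h1
  rw [show (OmegaC T S).act = _ from Omega_act _] at h2
  rw [show (OmegaC S T).inp = _ from Omega_inp _, show (OmegaC S T).out = _ from Omega_out _,
    show (OmegaC T S).inp = _ from Omega_inp _, show (OmegaC T S).out = _ from Omega_out _]
  rcases h1 with ⟨a, ha, rfl⟩ | ⟨n, hn, rfl⟩
  · rcases h2 with ⟨c, hc, he⟩ | ⟨n, _, he⟩
    · rw [Sum.inl.inj he] at hc
      rcases h ⟨ha, hc⟩ with ⟨hi, ho⟩ | ⟨hi, ho⟩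
      · exact Or.inl ⟨⟨a, hi, rfl⟩, ⟨a, ho, rfl⟩⟩
      · exact Or.inr ⟨⟨a, hi, rfl⟩, ⟨a, ho, rfl⟩⟩
    · exact nomatch he
  · rcases h2 with ⟨c, _, he⟩ | ⟨m, hm, he⟩
    · exact nomatch he
    · rw [Sum.inr.inj he] at hm
      exact absurd hn.1 fun h' => S.inp_out n hm.2 h'

lemma Reachable.of_star {M : MIO A} {p q : M.State} (hp : M.Reachable p)
    (h : M.tauMayStar p q) : M.Reachable q :=
  hp.trans (Relation.ReflTransGen.mono (fun _ _ hxy => ⟨hxy.choose, hxy.choose_spec.2⟩) _ _ h)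

lemma reach_transfer {P' P Q' Q : MIO A} {RP : P'.State → P.State → Prop}
    {RQ : Q'.State → Q.State → Prop}
    (hRP : IsWeakSim P' P RP) (hRQ : IsWeakSim Q' Q RQ)
    (sigP : SigEq P' P) (sigQ : SigEq Q' Q)
    (hc : Composable P Q) (hc' : Composable P' Q')
    (hP0 : RP P'.start P.start) (hQ0 : RQ Q'.start Q.start) :
    ∀ p', (syncComp P' Q' hc').Reachable p' →
      ∃ p, (syncComp P Q hc).Reachable p ∧ RP p'.1 p.1 ∧ RQ p'.2 p.2 := by
  have esh : shared P' Q' = shared P Q := shared_eq' sigP sigQ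
  intro p' h
  induction h with
  | refl => exact ⟨(P.start, Q.start), .refl, hP0, hQ0⟩
  | @tail b' c' _ step ih =>
    obtain ⟨p, hreach, hp1, hp2⟩ := ih
    obtain ⟨a, hmay⟩ := step
    rcases hmay with ⟨hsh', hmS, hmT⟩ | ⟨haP, hnsh, hm, heq⟩ | ⟨haQ, hnsh, hm, heq⟩
    · have haP' : a ∈ P'.inp ∪ P'.out := by
        rcases hc' hsh' with ⟨h1, _⟩ | ⟨_, h2⟩
        exacts [Or.inl h1, Or.inr h2]
      have haQ' : a ∈ Q'.inp ∪ Q'.out := by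
        rcases hc' hsh' with ⟨_, h2⟩ | ⟨h1, _⟩
        exacts [Or.inr h2, Or.inl h1]
      obtain ⟨u1, u2, u3, hu1, hu2, hu3, hru⟩ := (hRP _ _ hp1).2.2.1 a haP' _ hmS
      obtain ⟨v1, v2, v3, hv1, hv2, hv3, hrv⟩ := (hRQ _ _ hp2).2.2.1 a haQ' _ hmT
      have hshPQ : a ∈ shared P Q := by rw [← esh]; exact hsh'
      have r2 : (syncComp P Q hc).Reachable (u1, v1) :=
        (hreach.of_star (liftL_mayStar hc hu1)).of_star (liftR_mayStar hc hv1)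
      have r3 : (syncComp P Q hc).Reachable (u2, v2) :=
        r2.tail ⟨a, Or.inl ⟨hshPQ, hu2, hv2⟩⟩
      exact ⟨(u3, v3),
        (r3.of_star (liftL_mayStar hc hu3)).of_star (liftR_mayStar hc hv3), hru, hrv⟩
    · rcases haP with hv | hi
      · obtain ⟨u1, u2, u3, hu1, hu2, hu3, hru⟩ := (hRP _ _ hp1).2.2.1 a hv _ hm
        have step2 : (syncComp P Q hc).may (u1, p.2) a (u2, p.2) :=
          Or.inr (Or.inl ⟨by rw [← act_eq sigP]; exact Or.inl hv,
            by rw [← esh]; exact hnsh, hu2, rfl⟩)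
        have r : (syncComp P Q hc).Reachable (u2, p.2) :=
          (hreach.of_star (liftL_mayStar hc hu1)).tail ⟨a, step2⟩
        exact ⟨(u3, p.2), r.of_star (liftL_mayStar hc hu3), hru, by rw [heq]; exact hp2⟩
      · obtain ⟨u, hu, hru⟩ := (hRP _ _ hp1).2.2.2 a hi _ hm
        exact ⟨(u, p.2), hreach.of_star (liftL_mayStar hc hu), hru, by rw [heq]; exact hp2⟩
    · rcases haQ with hv | hi
      · obtain ⟨u1, u2, u3, hu1, hu2, hu3, hru⟩ := (hRQ _ _ hp2).2.2.1 a hv _ hm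
        have step2 : (syncComp P Q hc).may (p.1, u1) a (p.1, u2) :=
          Or.inr (Or.inr ⟨by rw [← act_eq sigQ]; exact Or.inl hv,
            by rw [← esh]; exact hnsh, hu2, rfl⟩)
        have r : (syncComp P Q hc).Reachable (p.1, u2) :=
          (hreach.of_star (liftR_mayStar hc hu1)).tail ⟨a, step2⟩
        exact ⟨(p.1, u3), r.of_star (liftR_mayStar hc hu3), by rw [heq]; exact hp1, hru⟩
      · obtain ⟨u, hu, hru⟩ := (hRQ _ _ hp2).2.2.2 a hi _ hm
        exact ⟨(p.1, u), hreach.of_star (liftR_mayStar hc hu), by rw [heq]; exact hp1, hru⟩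

lemma weakCompat_mono {P' P Q' Q : MIO A} (h : WeakCompat P Q)
    (hP : WeakRefines P' P) (hQ : WeakRefines Q' Q) : WeakCompat P' Q' := by
  obtain ⟨hc, hcompat⟩ := h
  obtain ⟨sigP, RP, hP0, hRP⟩ := hP
  obtain ⟨sigQ, RQ, hQ0, hRQ⟩ := hQ
  have hc' : Composable P' Q' := composable_of_sig sigP sigQ hc
  refine ⟨hc', ?_⟩
  rintro ⟨s', t'⟩ hreach'
  obtain ⟨p, hreach, hp1, hp2⟩ := reach_transfer hRP hRQ sigP sigQ hc hc' hP0 hQ0 _ hreach'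
  constructor
  · rintro a ⟨haO, haI⟩ s₂ hmay
    obtain ⟨u1, u2, _, hu1, hu2, _, _⟩ := (hRP _ _ hp1).2.2.1 a (Or.inr haO) _ hmay
    have hreach2 : (syncComp P Q hc).Reachable (u1, p.2) :=
      hreach.of_star (liftL_mayStar hc hu1)
    have haPQ : a ∈ P.out ∩ Q.inp := ⟨by rw [← sigP.2.1]; exact haO, by rw [← sigQ.1]; exact haI⟩
    obtain ⟨t1, t2, ht1, ht2⟩ := (hcompat (u1, p.2) hreach2).1 a haPQ _ hu2
    exact sim_weak_must hRQ hp2 (Or.inl haPQ.2) ht1 ht2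
  · rintro a ⟨haO, haI⟩ t₂ hmay
    obtain ⟨u1, u2, _, hu1, hu2, _, _⟩ := (hRQ _ _ hp2).2.2.1 a (Or.inr haO) _ hmay
    have hreach2 : (syncComp P Q hc).Reachable (p.1, u1) :=
      hreach.of_star (liftR_mayStar hc hu1)
    have haQP : a ∈ Q.out ∩ P.inp := ⟨by rw [← sigQ.2.1]; exact haO, by rw [← sigP.1]; exact haI⟩
    obtain ⟨t1, t2, ht1, ht2⟩ := (hcompat (p.1, u1) hreach2).2 a haQP _ hu2
    exact sim_weak_must hRP hp1 (Or.inl haQP.2) ht1 ht2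

end MIO


/-- MIOs with asynchronous composition, weak modal refinement and asynchronous
modal compatibility form an interface theory. -/
theorem async_interface_theory (A : Type) :
    (∀ S T : MIO A, AsyncCompat S T → Composable S T ∧ AsyncComposable S T) ∧
    (∀ S S' T T' : MIO A, WeakRefines S' S → WeakRefines T' T → Composable S T →
      Composable S' T' ∧
        ∃ (hA : AsyncComposable S T) (hA' : AsyncComposable S' T'),
          WeakRefines (asyncComp S' T' hA') (asyncComp S T hA)) ∧
    (∀ S S' T T' : MIO A,
      AsyncCompat S T → WeakRefines S' S → WeakRefines T' T →
      AsyncCompat S' T') := by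
  refine ⟨?_, ?_, ?_⟩
  · rintro S T ⟨hc, hac, _⟩
    exact ⟨hc, hac⟩
  · intro S S' T T' hS hT hc
    have hc' : Composable S' T' := composable_of_sig hS.1 hT.1 hc
    refine ⟨hc', asyncComposable_of_composable hc, asyncComposable_of_composable hc', ?_⟩
    exact syncComp_weakRefines (OmegaC_weakRefines hS hT) (OmegaC_weakRefines hT hS) _ _
  · rintro S S' T T' ⟨hc, hwc⟩ hS hT
    exact ⟨composable_of_sig hS.1 hT.1 hc,
      weakCompat_mono hwc (OmegaC_weakRefines hS hT) (OmegaC_weakRefines hT hS)⟩
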